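/- Let â_1,...,â_D > 0 and define W ∈ ℝ^{D×D} by W_{kl} = (1−λâ_k)²δ_{kl} + (λ²/S)â_kâ_l(1−δ_{kl}). If the operator norm ‖W‖ < 1, then |âᵀWâ| ≤ ‖â‖², which implies λ·((S−1)/S)∑_k â_k⁴ + (λ/S)(∑_k â_k²)² ≤ 2∑_k â_k³, where â = (â_1,...,â_D)ᵀ. -/

import Mathlib

/-- If the operator norm of the stability matrix `W` is below one, then
`|âᵀWâ| ≤ ‖â‖²`, which implies the stability necessary condition. -/
theorem stmt11 (D : ℕ) (S lam : ℝ) (hS : 1 ≤ S) (hlam : 0 < lam)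
    (ahat : Fin D → ℝ) (hpos : ∀ k, 0 < ahat k)
    (W : Matrix (Fin D) (Fin D) ℝ)
    (hW : W = Matrix.of fun k l =>
      if k = l then (1 - lam * ahat k) ^ 2 else (lam ^ 2 / S) * ahat k * ahat l)
    (hnorm : ‖Matrix.toEuclideanCLM (𝕜 := ℝ) W‖ < 1) :
    |∑ k, ∑ l, ahat k * W k l * ahat l| ≤ (∑ k, ahat k ^ 2) ∧
    lam * ((S - 1) / S) * (∑ k, ahat k ^ 4) + (lam / S) * (∑ k, ahat k ^ 2) ^ 2
      ≤ 2 * (∑ k, ahat k ^ 3) := by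
  have hS0 : (0:ℝ) < S := lt_of_lt_of_le one_pos hS
  set v : EuclideanSpace ℝ (Fin D) := (WithLp.equiv 2 _).symm ahat with hv
  -- norms
  have hvnorm : (inner ℝ v v : ℝ) = ∑ k, ahat k ^ 2 := by
    rw [PiLp.inner_apply]
    simp [hv, sq]
  have happ : ∀ k, (Matrix.toEuclideanCLM (𝕜 := ℝ) W v) k = ∑ l, W k l * ahat l := by
    intro k
    rw [hv, WithLp.equiv_symm_apply, Matrix.toEuclideanCLM_toLp]
    simp [Matrix.mulVec, dotProduct]
  have hquad : (inner ℝ v (Matrix.toEuclideanCLM (𝕜 := ℝ) W v) : ℝ) = ∑ k, ∑ l, ahat k * W k l * ahat l := by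
    rw [PiLp.inner_apply]
    refine Finset.sum_congr rfl fun k _ => ?_
    rw [happ k]
    simp [hv, Finset.mul_sum, mul_assoc, mul_comm, mul_left_comm]
  have hbound : |∑ k, ∑ l, ahat k * W k l * ahat l| ≤ ∑ k, ahat k ^ 2 := by
    rw [← hquad]
    calc |(inner ℝ v (Matrix.toEuclideanCLM (𝕜 := ℝ) W v) : ℝ)| ≤ ‖v‖ * ‖Matrix.toEuclideanCLM (𝕜 := ℝ) W v‖ :=
          abs_real_inner_le_norm _ _
      _ ≤ ‖v‖ * (‖Matrix.toEuclideanCLM (𝕜 := ℝ) W‖ * ‖v‖) := by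
          gcongr; exact (Matrix.toEuclideanCLM (𝕜 := ℝ) W).le_opNorm v
      _ ≤ ‖v‖ * (1 * ‖v‖) := by
          gcongr
      _ = (inner ℝ v v : ℝ) := by rw [one_mul, real_inner_self_eq_norm_mul_norm]
      _ = ∑ k, ahat k ^ 2 := hvnorm
  refine ⟨hbound, ?_⟩
  -- expand the quadratic form
  have hexp : ∑ k, ∑ l, ahat k * W k l * ahat l
      = (lam^2/S) * (∑ k, ahat k ^ 2)^2
        + ∑ k, ((1 - lam * ahat k)^2 * ahat k ^ 2 - (lam^2/S) * ahat k ^ 4) := by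
    subst hW
    have : ∀ k l, ahat k * (Matrix.of fun k l =>
        if k = l then (1 - lam * ahat k) ^ 2 else (lam ^ 2 / S) * ahat k * ahat l) k l * ahat l
        = (lam^2/S) * (ahat k ^ 2 * ahat l ^ 2)
          + (if l = k then (1 - lam * ahat k)^2 * ahat k ^ 2 - (lam^2/S) * ahat k ^ 4 else 0) := by
      intro k l
      rcases eq_or_ne k l with h | h
      · subst h; rw [Matrix.of_apply, if_pos rfl, if_pos rfl]; ring
      · rw [Matrix.of_apply, if_neg h, if_neg h.symm]; ring
    simp only [this, Finset.sum_add_distrib, Finset.sum_ite_eq, Finset.sum_ite_eq', Finset.mem_univ, if_true,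
      ← Finset.mul_sum, ← Finset.sum_mul, sq (∑ k, ahat k ^ 2)]
  have key : (lam^2/S) * (∑ k, ahat k ^ 2)^2
        + ∑ k, ((1 - lam * ahat k)^2 * ahat k ^ 2 - (lam^2/S) * ahat k ^ 4)
        ≤ ∑ k, ahat k ^ 2 := by
    rw [← hexp]; exact le_trans (le_abs_self _) hbound
  have hsplit : ∑ k, ((1 - lam * ahat k)^2 * ahat k ^ 2 - (lam^2/S) * ahat k ^ 4)
      = ∑ k, ahat k ^ 2 - 2*lam*∑ k, ahat k ^ 3 + lam^2*∑ k, ahat k^4 - (lam^2/S)*∑ k, ahat k^4 := by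
    rw [Finset.mul_sum, Finset.mul_sum, Finset.mul_sum]
    rw [← Finset.sum_sub_distrib, ← Finset.sum_add_distrib, ← Finset.sum_sub_distrib]
    exact Finset.sum_congr rfl fun k _ => by ring
  rw [hsplit] at key
  have h2 : lam^2 * ((S-1)/S) * (∑ k, ahat k ^ 4) + (lam^2/S) * (∑ k, ahat k ^ 2)^2
      ≤ 2*lam*∑ k, ahat k ^ 3 := by
    have : lam^2*∑ k, ahat k^4 - (lam^2/S)*∑ k, ahat k^4 = lam^2 * ((S-1)/S) * (∑ k, ahat k ^ 4) := by
      field_simp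
    nlinarith [key, this]
  calc lam * ((S - 1) / S) * (∑ k, ahat k ^ 4) + (lam / S) * (∑ k, ahat k ^ 2) ^ 2
      = (lam^2 * ((S-1)/S) * (∑ k, ahat k ^ 4) + (lam^2/S) * (∑ k, ahat k ^ 2)^2) / lam := by
        field_simp
    _ ≤ (2*lam*∑ k, ahat k ^ 3) / lam := by gcongr
    _ = 2 * ∑ k, ahat k ^ 3 := by field_simp
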